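/- For all lists A, B, C over a type with decidable equality, d(A ++ C, B ++ C) = d(A, B). In particular, if the p characters of A following position x coincide with the p characters of B following position y, then d(A.take (x+p), B.take (y+p)) = d(A.take x, B.take y): matching a common prefix of the suffixes for free (sliding along zero-weight diagonal edges) preserves the edit distance. -/

import Mathlib

/-- Cost structure for Levenshtein edit distance (as in Mathlib's former `Levenshtein.Cost`). -/
structure Levenshtein.Cost (α β δ : Type*) where
  delete : α → δ
  insert : β → δ
  substitute : α → β → δ

/-- The default cost structure (as in Mathlib's former `Levenshtein.defaultCost`). -/
def Levenshtein.defaultCost {α : Type*} [DecidableEq α] : Levenshtein.Cost α α ℕ where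
  delete _ := 1
  insert _ := 1
  substitute a b := if a = b then 0 else 1

/-- Helper for `suffixLevenshtein` (as in Mathlib's former `Levenshtein.impl`). -/
def Levenshtein.impl {α β δ : Type*} [AddZeroClass δ] [Min δ] (C : Levenshtein.Cost α β δ)
    (xs : List α) (y : β) (d : {r : List δ // 0 < r.length}) : {r : List δ // 0 < r.length} :=
  let ⟨ds, w⟩ := d
  xs.zip (ds.zip ds.tail) |>.foldr
    (init := ⟨[ds.getLast (List.length_pos_iff.mp w) + C.insert y], by simp⟩)
    (fun ⟨x, d₀, d₁⟩ ⟨r, w⟩ =>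
      ⟨min (C.delete x + r[0]) (min (C.insert y + d₀) (C.substitute x y + d₁)) :: r, by simp⟩)

/-- As in Mathlib's former `suffixLevenshtein`. -/
def suffixLevenshtein {α β δ : Type*} [AddZeroClass δ] [Min δ] (C : Levenshtein.Cost α β δ)
    (xs : List α) (ys : List β) : {r : List δ // 0 < r.length} :=
  ys.foldr
    (Levenshtein.impl C xs)
    (xs.foldr (init := ⟨[0], by simp⟩) (fun a ⟨r, w⟩ => ⟨(C.delete a + r[0]) :: r, by simp⟩))

/-- As in Mathlib's former `levenshtein`. -/
def levenshtein {α β δ : Type*} [AddZeroClass δ] [Min δ] (C : Levenshtein.Cost α β δ)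
    (xs : List α) (ys : List β) : δ :=
  let ⟨r, w⟩ := suffixLevenshtein C xs ys
  r[0]

/-- The unit-cost Levenshtein edit distance. -/
def editDist {α : Type*} [DecidableEq α] (A B : List α) : ℕ :=
  levenshtein Levenshtein.defaultCost A B


namespace Levenshtein

@[simp] theorem defaultCost_delete {α : Type*} [DecidableEq α] (a : α) :
    (defaultCost (α := α)).delete a = 1 := rfl

@[simp] theorem defaultCost_insert {α : Type*} [DecidableEq α] (a : α) :
    (defaultCost (α := α)).insert a = 1 := rfl

@[simp] theorem defaultCost_substitute {α : Type*} [DecidableEq α] (a b : α) :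
    (defaultCost (α := α)).substitute a b = if a = b then 0 else 1 := rfl

variable {α β δ : Type*} [AddZeroClass δ] [Min δ] {C : Cost α β δ}

theorem impl_cons (x : α) (xs : List α) (y : β) (d : δ) (ds : List δ)
    (w : 0 < (d :: ds).length) (w' : 0 < List.length ds) :
    impl C (x :: xs) y ⟨d :: ds, w⟩ =
      let ⟨r, w⟩ := impl C xs y ⟨ds, w'⟩
      ⟨min (C.delete x + r[0]) (min (C.insert y + d) (C.substitute x y + ds[0])) :: r, by simp⟩ :=
  match ds, w' with | _ :: _, _ => rfl

theorem impl_cons_fst_zero (x : α) (xs : List α) (y : β) (d : δ) (ds : List δ)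
    (w : 0 < (d :: ds).length) (h : 0 < (impl C (x :: xs) y ⟨d :: ds, w⟩).1.length)
    (w' : 0 < List.length ds) : (impl C (x :: xs) y ⟨d :: ds, w⟩).1[0] =
      let ⟨r, w⟩ := impl C xs y ⟨ds, w'⟩
      min (C.delete x + r[0]) (min (C.insert y + d) (C.substitute x y + ds[0])) :=
  match ds, w' with | _ :: _, _ => rfl

theorem impl_nil_singleton (y : β) (a : δ) (d : {r : List δ // 0 < r.length})
    (hd : d.1 = [a]) (h : 0 < (impl C [] y d).1.length) :
    (impl C [] y d).1[0] = a + C.insert y := by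
  obtain ⟨r, w⟩ := d
  simp only at hd
  subst hd
  rfl

theorem impl_length (xs : List α) (y : β) (d : {r : List δ // 0 < r.length})
    (w : d.1.length = xs.length + 1) :
    (impl C xs y d).1.length = xs.length + 1 := by
  induction xs generalizing d with
  | nil => rfl
  | cons x xs ih =>
    match d, w with
    | ⟨d₁ :: d₂ :: ds, _⟩, w =>
      rw [impl_cons (w' := by simp)]
      simp only [List.length_cons]
      congr 1
      exact ih ⟨d₂ :: ds, (by simp)⟩ (by simpa using w)

end Levenshtein

open Levenshtein in
theorem suffixLevenshtein_length {α β δ : Type*} [AddZeroClass δ] [Min δ] (C : Cost α β δ)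
    (xs : List α) (ys : List β) :
    (suffixLevenshtein C xs ys).1.length = xs.length + 1 := by
  induction ys with
  | nil =>
    dsimp [suffixLevenshtein]
    induction xs with
    | nil => rfl
    | cons _ xs ih => simp_all
  | cons y ys ih =>
    dsimp [suffixLevenshtein]
    rw [impl_length]
    exact ih

theorem suffixLevenshtein_cons₁_aux {α : Type*} {x y : {r : List α // 0 < r.length}}
    (w₀ : x.1[0]'x.2 = y.1[0]'y.2) (w : x.1.tail = y.1.tail) : x = y := by
  match x, y with
  | ⟨hx :: tx, _⟩, ⟨hy :: ty, _⟩ => simp_all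

open Levenshtein in
theorem suffixLevenshtein_cons₁ {α β δ : Type*} [AddZeroClass δ] [Min δ] (C : Cost α β δ)
    (x : α) (xs : List α) (ys : List β) :
    suffixLevenshtein C (x :: xs) ys =
      ⟨levenshtein C (x :: xs) ys :: (suffixLevenshtein C xs ys).1, by simp⟩ := by
  induction ys with
  | nil => rfl
  | cons y ys ih =>
    apply suffixLevenshtein_cons₁_aux
    · rfl
    · show (impl C (x :: xs) y (suffixLevenshtein C (x :: xs) ys)).1.tail = _
      rw [ih, impl_cons (w' := by simp [suffixLevenshtein_length])]
      rfl

open Levenshtein in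
theorem levenshtein_cons_cons {α β δ : Type*} [AddZeroClass δ] [Min δ] (C : Cost α β δ)
    (x : α) (xs : List α) (y : β) (ys : List β) :
    levenshtein C (x :: xs) (y :: ys) =
      min (C.delete x + levenshtein C xs (y :: ys))
        (min (C.insert y + levenshtein C (x :: xs) ys)
          (C.substitute x y + levenshtein C xs ys)) := by
  show (impl C (x :: xs) y (suffixLevenshtein C (x :: xs) ys)).1[0]'(by
    rw [impl_length] <;> simp [suffixLevenshtein_length]) = _
  simp only [suffixLevenshtein_cons₁]
  rw [impl_cons_fst_zero (w' := by simp [suffixLevenshtein_length])]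
  rfl

@[simp] theorem levenshtein_nil_nil {α β δ : Type*} [AddZeroClass δ] [Min δ]
    (C : Levenshtein.Cost α β δ) : levenshtein C [] [] = 0 := rfl

@[simp] theorem levenshtein_nil_cons {α β δ : Type*} [AddZeroClass δ] [Min δ]
    (C : Levenshtein.Cost α β δ) (y : β) (ys : List β) :
    levenshtein C [] (y :: ys) = levenshtein C [] ys + C.insert y := by
  have h : (suffixLevenshtein C [] ys).1 = [levenshtein C [] ys] := by
    have hl := suffixLevenshtein_length C [] ys
    show _ = [(suffixLevenshtein C [] ys).1[0]'(by simp [hl])]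
    match suffixLevenshtein C [] ys, hl with
    | ⟨[a], _⟩, _ => rfl
  show (Levenshtein.impl C [] y (suffixLevenshtein C [] ys)).1[0]'(by
    rw [Levenshtein.impl_length] <;> simp [suffixLevenshtein_length]) = _
  rw [Levenshtein.impl_nil_singleton y _ _ h]

@[simp] theorem levenshtein_cons_nil {α β δ : Type*} [AddZeroClass δ] [Min δ]
    (C : Levenshtein.Cost α β δ) (x : α) (xs : List α) :
    levenshtein C (x :: xs) ([] : List β) = C.delete x + levenshtein C xs [] := rfl

section EditDistAux
open Levenshtein


variable {α : Type*} [DecidableEq α]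

lemma ed_nil_left (B : List α) : levenshtein (defaultCost (α := α)) [] B = B.length := by
  induction B with
  | nil => simp
  | cons b B ih => simp [ih]

lemma ed_nil_right (A : List α) : levenshtein (defaultCost (α := α)) A [] = A.length := by
  induction A with
  | nil => simp
  | cons a A ih => simp [ih]; omega

lemma ed_self (C : List α) : levenshtein (defaultCost (α := α)) C C = 0 := by
  induction C with
  | nil => simp
  | cons c C ih => rw [levenshtein_cons_cons]; simp [ih]

lemma ed_le_insert (A : List α) (b : α) (B : List α) :
    levenshtein (defaultCost (α := α)) A (b :: B) ≤ 1 + levenshtein defaultCost A B := by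
  cases A with
  | nil => simp
  | cons a A => rw [levenshtein_cons_cons]; simp

lemma ed_le_delete (a : α) (A B : List α) :
    levenshtein (defaultCost (α := α)) (a :: A) B ≤ 1 + levenshtein defaultCost A B := by
  cases B with
  | nil => simp
  | cons b B => rw [levenshtein_cons_cons]; simp

lemma ed_length_bound (A : List α) : ∀ B : List α,
    B.length ≤ A.length + levenshtein (defaultCost (α := α)) A B ∧
    A.length ≤ B.length + levenshtein (defaultCost (α := α)) A B := by
  induction A with
  | nil => intro B; simp [ed_nil_left]
  | cons a A ihA =>
    intro B
    induction B with
    | nil => simp [ed_nil_right]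
    | cons b B ihB =>
      rw [levenshtein_cons_cons]
      have h1 := (ihA (b :: B)).1
      have h1' := (ihA (b :: B)).2
      have h2 := ihB.1
      have h2' := ihB.2
      have h3 := (ihA B).1
      have h3' := (ihA B).2
      simp only [defaultCost_delete, defaultCost_insert, List.length_cons] at *
      constructor <;> omega

lemma ed_prepend (B C : List α) :
    levenshtein (defaultCost (α := α)) C (B ++ C) = B.length := by
  refine Nat.le_antisymm ?_ ?_
  · induction B with
    | nil => simp [ed_self]
    | cons b B ih =>
      calc levenshtein defaultCost C (b :: B ++ C)
          ≤ 1 + levenshtein defaultCost C (B ++ C) := ed_le_insert _ _ _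
        _ ≤ (b :: B).length := by simp; omega
  · have := (ed_length_bound C (B ++ C)).1
    simp at this ⊢; omega

lemma ed_prepend' (A C : List α) :
    levenshtein (defaultCost (α := α)) (A ++ C) C = A.length := by
  refine Nat.le_antisymm ?_ ?_
  · induction A with
    | nil => simp [ed_self]
    | cons a A ih =>
      calc levenshtein defaultCost (a :: A ++ C) C
          ≤ 1 + levenshtein defaultCost (A ++ C) C := ed_le_delete _ _ _
        _ ≤ (a :: A).length := by simp; omega
  · have := (ed_length_bound (A ++ C) C).2
    simp at this ⊢; omega

lemma ed_main (A : List α) : ∀ B C : List α,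
    levenshtein (defaultCost (α := α)) (A ++ C) (B ++ C) = levenshtein defaultCost A B := by
  induction A with
  | nil =>
    intro B C
    rw [List.nil_append, ed_prepend, ed_nil_left]
  | cons a A ihA =>
    intro B
    induction B with
    | nil =>
      intro C
      rw [List.nil_append, ed_prepend', ed_nil_right]
    | cons b B ihB =>
      intro C
      have h1 := ihA (b :: B) C
      have h2 := ihB C
      have h3 := ihA B C
      simp only [List.cons_append] at h1 h2 h3 ⊢
      rw [levenshtein_cons_cons, levenshtein_cons_cons, h1, h2, h3]

end EditDistAux

/-- Appending a common suffix preserves the edit distance; in particular, if the `p` characters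
of `A` following position `x` coincide with the `p` characters of `B` following position `y`,
then sliding along the zero-weight diagonal edges preserves the edit distance. -/
theorem editDist_append_right_cancel {α : Type*} [DecidableEq α] :
    (∀ A B C : List α, editDist (A ++ C) (B ++ C) = editDist A B) ∧
    (∀ (A B : List α) (x y p : ℕ), (A.drop x).take p = (B.drop y).take p →
      editDist (A.take (x + p)) (B.take (y + p)) = editDist (A.take x) (B.take y)) := by
  constructor
  · intro A B C
    exact ed_main A B C
  · intro A B x y p h
    show levenshtein _ _ _ = levenshtein _ _ _
    rw [List.take_add, List.take_add, h]
    exact ed_main (A.take x) (B.take y) _
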